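/- Let n ≥ 3 and let t be an integer. There is a unique group endomorphism ρ of the braid group B_{n+1} satisfying ρ(σ_i) = σ_i z^t for all 1 ≤ i ≤ n. This endomorphism is injective for every t, and it is surjective if and only if t = 0. -/

import Mathlib

/-- The braid relations on `n` generators `σ_1, …, σ_n` (indexed by `Fin n`):
`σ_i σ_j σ_i = σ_j σ_i σ_j` when `j = i + 1`, and `σ_i σ_j = σ_j σ_i` when `j ≥ i + 2`.
The resulting presented group is the braid group `B_{n+1}` on `n+1` strands. -/
def braidRels (n : ℕ) : Set (FreeGroup (Fin n)) :=
  {r | (∃ i j : Fin n, (i : ℕ) + 1 = (j : ℕ) ∧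
          r = .of i * .of j * .of i * (.of j * .of i * .of j)⁻¹) ∨
       (∃ i j : Fin n, (i : ℕ) + 2 ≤ (j : ℕ) ∧
          r = .of i * .of j * (.of j * .of i)⁻¹)}

/-- The braid group `B_{n+1}` on `n+1` strands, presented with `n` generators. -/
abbrev BraidGroup (n : ℕ) : Type := PresentedGroup (braidRels n)

/-- The standard generator `σ_{i+1}` of the braid group. -/
def braidGen {n : ℕ} (i : Fin n) : BraidGroup n := PresentedGroup.of i

/-- The full twist `z = (σ_1 σ_2 ⋯ σ_n)^{n+1}`, which generates the center of `B_{n+1}`. -/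
def fullTwist (n : ℕ) : BraidGroup n :=
  ((List.ofFn fun i : Fin n => braidGen i).prod) ^ (n + 1)

namespace BraidAux

lemma rel_one {n : ℕ} {r : FreeGroup (Fin n)} (hr : r ∈ braidRels n) :
    PresentedGroup.mk (braidRels n) r = 1 := by
  have : r ∈ Subgroup.normalClosure (braidRels n) := Subgroup.subset_normalClosure hr
  exact (QuotientGroup.eq_one_iff r).2 this

lemma braid_rel {n : ℕ} (i j : Fin n) (h : (i : ℕ) + 1 = (j : ℕ)) :
    braidGen i * braidGen j * braidGen i = braidGen j * braidGen i * braidGen j := by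
  have h1 := rel_one (n := n) (r := .of i * .of j * .of i * (.of j * .of i * .of j)⁻¹)
    (Or.inl ⟨i, j, h, rfl⟩)
  have : (braidGen i * braidGen j * braidGen i) * (braidGen j * braidGen i * braidGen j)⁻¹ = 1 := by
    simpa [braidGen, PresentedGroup.of] using h1
  exact mul_inv_eq_one.mp this

lemma comm_rel {n : ℕ} (i j : Fin n) (h : (i : ℕ) + 2 ≤ (j : ℕ)) :
    braidGen i * braidGen j = braidGen j * braidGen i := by
  have h1 := rel_one (n := n) (r := .of i * .of j * (.of j * .of i)⁻¹)
    (Or.inr ⟨i, j, h, rfl⟩)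
  have : (braidGen i * braidGen j) * (braidGen j * braidGen i)⁻¹ = 1 := by
    simpa [braidGen, PresentedGroup.of] using h1
  exact mul_inv_eq_one.mp this

/-- `g n i = σ_{i+1}` for `i < n`, and `1` otherwise. -/
def g (n : ℕ) (i : ℕ) : BraidGroup n := if h : i < n then braidGen ⟨i, h⟩ else 1

lemma g_braid {n : ℕ} {i : ℕ} (h : i + 1 < n) :
    g n i * g n (i+1) * g n i = g n (i+1) * g n i * g n (i+1) := by
  have hi : i < n := by omega
  simp only [g, dif_pos h, dif_pos hi]
  exact braid_rel ⟨i, hi⟩ ⟨i+1, h⟩ rfl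

lemma g_comm {n : ℕ} {i j : ℕ} (h : i + 2 ≤ j) :
    g n i * g n j = g n j * g n i := by
  by_cases hi : i < n
  · by_cases hj : j < n
    · simp only [g, dif_pos hi, dif_pos hj]
      exact comm_rel ⟨i, hi⟩ ⟨j, hj⟩ h
    · simp [g, dif_neg hj]
  · simp [g, dif_neg hi]

/-- `d n k = σ_1 σ_2 ⋯ σ_k`. -/
def d (n : ℕ) : ℕ → BraidGroup n
  | 0 => 1
  | k+1 => d n k * g n k

lemma comm_d {n : ℕ} {k j : ℕ} (h : k + 1 ≤ j) : d n k * g n j = g n j * d n k := by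
  induction k with
  | zero => simp [d]
  | succ m ih =>
    have h1 : m + 1 ≤ j := by omega
    have h2 : m + 2 ≤ j := by omega
    calc d n (m+1) * g n j = d n m * (g n m * g n j) := by rw [d]; group
    _ = d n m * g n j * g n m := by rw [g_comm h2]; group
    _ = g n j * d n (m+1) := by rw [ih h1, d]; group

lemma shift_aux {n : ℕ} (i m : ℕ) (h : i + 2 + m ≤ n) :
    d n (i + 2 + m) * g n i = g n (i+1) * d n (i + 2 + m) := by
  induction m with
  | zero =>
    have hb : i + 1 < n := by omega
    show d n (i+1+1) * g n i = g n (i+1) * d n (i+1+1)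
    rw [d, d]
    calc d n i * g n i * g n (i+1) * g n i
        = d n i * (g n i * g n (i+1) * g n i) := by group
      _ = d n i * (g n (i+1) * g n i * g n (i+1)) := by rw [g_braid hb]
      _ = d n i * g n (i+1) * g n i * g n (i+1) := by group
      _ = g n (i+1) * d n i * g n i * g n (i+1) := by rw [comm_d (le_refl (i+1))]
      _ = g n (i+1) * (d n i * g n i * g n (i+1)) := by group
  | succ m ih =>
    have h1 : i + 2 + m ≤ n := by omega
    show d n (i+2+m+1) * g n i = g n (i+1) * d n (i+2+m+1)
    rw [d]
    calc d n (i+2+m) * g n (i+2+m) * g n i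
        = d n (i+2+m) * (g n (i+2+m) * g n i) := by group
      _ = d n (i+2+m) * (g n i * g n (i+2+m)) := by
            rw [← g_comm (show i+2 ≤ i+2+m by omega)]
      _ = d n (i+2+m) * g n i * g n (i+2+m) := by group
      _ = g n (i+1) * d n (i+2+m) * g n (i+2+m) := by rw [ih h1]
      _ = g n (i+1) * (d n (i+2+m) * g n (i+2+m)) := by group

lemma shift {n : ℕ} {i k : ℕ} (h1 : i + 2 ≤ k) (h2 : k ≤ n) :
    d n k * g n i = g n (i+1) * d n k := by
  have := shift_aux (n := n) i (k - i - 2) (by omega)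
  have hk : i + 2 + (k - i - 2) = k := by omega
  rwa [hk] at this

/-- `(σ_1 ⋯ σ_{m+1})^2 σ_{m+1} = σ_1 (σ_1 ⋯ σ_{m+1})^2`. -/
lemma key {n : ℕ} (m : ℕ) (h : m < n) :
    d n (m+1) * d n (m+1) * g n m = g n 0 * (d n (m+1) * d n (m+1)) := by
  induction m with
  | zero => show d n 1 * d n 1 * g n 0 = _
            rw [d, d]; group
  | succ m ih =>
    have hm : m < n := by omega
    set a := g n m with ha
    set b := g n (m+1) with hbdef
    set E := d n m with hE
    set D := d n (m+1) with hDdef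
    have hD : D = E * a := rfl
    have hgd : b * D = E * (b * a) := by
      rw [hD, ← mul_assoc, ← comm_d (le_refl (m+1))]
      exact mul_assoc _ _ _
    have hb : a * b * a = b * a * b := g_braid (n := n) (i := m) h
    have ihm := ih hm
    show D * b * (D * b) * b = g n 0 * (D * b * (D * b))
    have lhs : D * b * (D * b) * b = g n 0 * (D * D) * (b * a) := by
      calc D * b * (D * b) * b
          = D * (b * D) * (b * b) := by group
        _ = D * (E * (b * a)) * (b * b) := by rw [hgd]
        _ = D * E * (b * a * b) * b := by group
        _ = D * E * (a * b * a) * b := by rw [hb]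
        _ = D * (E * a) * (b * a * b) := by group
        _ = D * (E * a) * (a * b * a) := by rw [← hb]
        _ = D * D * a * (b * a) := by rw [← hD]; group
        _ = g n 0 * (D * D) * (b * a) := by rw [ihm]
    have rhs : g n 0 * (D * b * (D * b)) = g n 0 * (D * D) * (b * a) := by
      calc g n 0 * (D * b * (D * b))
          = g n 0 * D * (b * D) * b := by group
        _ = g n 0 * D * (E * (b * a)) * b := by rw [hgd]
        _ = g n 0 * D * E * (b * a * b) := by group
        _ = g n 0 * D * E * (a * b * a) := by rw [hb]
        _ = g n 0 * (D * (E * a)) * (b * a) := by group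
        _ = g n 0 * (D * D) * (b * a) := by rw [← hD]
    rw [lhs, rhs]

lemma pow_shift {n : ℕ} (m i : ℕ) (h : i + m + 1 ≤ n) :
    (d n n) ^ m * g n i = g n (i + m) * (d n n) ^ m := by
  induction m with
  | zero => simp
  | succ m ih =>
    have h1 : i + m + 1 ≤ n := by omega
    calc (d n n) ^ (m+1) * g n i = d n n * ((d n n) ^ m * g n i) := by
          rw [pow_succ']; group
      _ = d n n * g n (i + m) * (d n n) ^ m := by rw [ih h1]; group
      _ = g n (i + m + 1) * d n n * (d n n) ^ m := by
          rw [shift (show i + m + 2 ≤ n by omega) (le_refl n)]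
      _ = g n (i + m + 1) * (d n n) ^ (m+1) := by rw [pow_succ']; group

lemma twist_comm_g {n : ℕ} (i : ℕ) (hi : i < n) :
    (d n n) ^ (n + 1) * g n i = g n i * (d n n) ^ (n + 1) := by
  have h1 : (d n n) ^ (n - 1 - i) * g n i = g n (n - 1) * (d n n) ^ (n - 1 - i) := by
    have e : i + (n - 1 - i) = n - 1 := by omega
    have := pow_shift (n := n) (n - 1 - i) i (by omega)
    rwa [e] at this
  have hdn : d n ((n - 1) + 1) = d n n := by congr 1; omega
  have h2 : (d n n) ^ 2 * g n (n - 1) = g n 0 * (d n n) ^ 2 := by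
    have := key (n := n) (n - 1) (by omega)
    rw [hdn] at this
    rw [pow_two]; exact this
  have h3 : (d n n) ^ i * g n 0 = g n i * (d n n) ^ i := by
    simpa using pow_shift (n := n) i 0 (by omega)
  have hsplit : (d n n) ^ (n + 1) = (d n n) ^ i * (d n n) ^ 2 * (d n n) ^ (n - 1 - i) := by
    rw [← pow_add, ← pow_add]; congr 1; omega
  calc (d n n) ^ (n + 1) * g n i
      = (d n n) ^ i * (d n n) ^ 2 * ((d n n) ^ (n - 1 - i) * g n i) := by rw [hsplit]; group
    _ = (d n n) ^ i * ((d n n) ^ 2 * g n (n - 1)) * (d n n) ^ (n - 1 - i) := by rw [h1]; group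
    _ = (d n n) ^ i * g n 0 * (d n n) ^ 2 * (d n n) ^ (n - 1 - i) := by rw [h2]; group
    _ = g n i * ((d n n) ^ i * (d n n) ^ 2 * (d n n) ^ (n - 1 - i)) := by rw [h3]; group
    _ = g n i * (d n n) ^ (n + 1) := by rw [← hsplit]

lemma dn_eq {n : ℕ} : (List.ofFn fun i : Fin n => braidGen i).prod = d n n := by
  suffices h : ∀ k (hk : k ≤ n),
      ((List.ofFn fun i : Fin n => braidGen i).take k).prod = d n k by
    have h2 := h n (le_refl n)
    rwa [List.take_of_length_le (by simp)] at h2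
  intro k hk
  induction k with
  | zero => simp [d]
  | succ m ih =>
    have hm : m ≤ n := by omega
    have hlen : m < (List.ofFn fun i : Fin n => braidGen i).length := by simpa using hk
    rw [List.take_succ, List.prod_append, ih hm]
    have : (List.ofFn fun i : Fin n => braidGen i)[m]? = some (g n m) := by
      rw [List.getElem?_eq_getElem hlen]
      simp [g, dif_pos (show m < n by omega)]
    rw [this, d]
    simp

lemma fullTwist_eq {n : ℕ} : fullTwist n = (d n n) ^ (n + 1) := by
  rw [fullTwist, dn_eq]

lemma fullTwist_comm {n : ℕ} (x : BraidGroup n) : fullTwist n * x = x * fullTwist n := by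
  revert x
  have H : ∀ x : BraidGroup n, x ∈ Subgroup.centralizer {fullTwist n} := by
    intro x
    apply PresentedGroup.generated_by
    intro j
    rw [Subgroup.mem_centralizer_iff]
    rintro y ⟨rfl⟩
    have : PresentedGroup.of (rels := braidRels n) j = g n j := by
      simp [g, braidGen, dif_pos j.isLt]
    rw [this, fullTwist_eq]
    exact twist_comm_g j j.isLt
  intro x
  exact (Subgroup.mem_centralizer_iff.mp (H x)) (fullTwist n) rfl


lemma commute_fullTwist {n : ℕ} (x : BraidGroup n) : Commute (fullTwist n) x :=
  fullTwist_comm x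

/-- The exponent-sum homomorphism `B_{n+1} → ℤ`, `σ_i ↦ 1`. -/
def expSum (n : ℕ) : BraidGroup n →* Multiplicative ℤ :=
  PresentedGroup.toGroup (f := fun _ : Fin n => Multiplicative.ofAdd (1 : ℤ)) (by
    rintro r (⟨i, j, hij, rfl⟩ | ⟨i, j, hij, rfl⟩) <;>
      simp [map_mul, map_inv] <;> group)

lemma expSum_gen {n : ℕ} (i : Fin n) :
    expSum n (braidGen i) = Multiplicative.ofAdd (1 : ℤ) :=
  PresentedGroup.toGroup.of _

/-- Additive exponent sum. -/
def E {n : ℕ} (x : BraidGroup n) : ℤ := Multiplicative.toAdd (expSum n x)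

lemma E_mul {n : ℕ} (x y : BraidGroup n) : E (x * y) = E x + E y := by
  simp [E, map_mul]

lemma E_gen {n : ℕ} (i : Fin n) : E (braidGen i) = 1 := by
  simp [E, expSum_gen]

lemma E_one {n : ℕ} : E (1 : BraidGroup n) = 0 := by simp [E]

lemma E_g {n : ℕ} {i : ℕ} (h : i < n) : E (g n i) = 1 := by
  rw [g, dif_pos h]; exact E_gen _

lemma E_d {n : ℕ} {k : ℕ} (h : k ≤ n) : E (d n k) = k := by
  induction k with
  | zero => simpa [d] using E_one
  | succ m ih =>
    rw [d, E_mul, ih (by omega), E_g (show m < n by omega)]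
    push_cast; ring

lemma E_fullTwist {n : ℕ} : E (fullTwist n) = (n + 1) * n := by
  rw [fullTwist_eq]
  have h : ∀ k : ℕ, E ((d n n) ^ k) = k * n := by
    intro k
    induction k with
    | zero => simpa using E_one
    | succ m ih =>
      rw [pow_succ, E_mul, ih, E_d (le_refl n)]
      push_cast; ring
  rw [h (n+1)]; push_cast; ring

lemma E_fullTwist_zpow {n : ℕ} (k : ℤ) : E (fullTwist n ^ k) = k * ((n + 1) * n) := by
  have : expSum n (fullTwist n ^ k) = (expSum n (fullTwist n)) ^ k := map_zpow _ _ _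
  rw [E, this, toAdd_zpow]
  rw [smul_eq_mul]
  congr 1
  exact E_fullTwist

/-- The transvection endomorphism `x ↦ x ⬝ z^{t e(x)}`. -/
def trans (n : ℕ) (t : ℤ) : BraidGroup n →* BraidGroup n where
  toFun x := x * fullTwist n ^ (t * E x)
  map_one' := by simp [E_one]
  map_mul' x y := by
    have hc : fullTwist n ^ (t * E x) * y = y * fullTwist n ^ (t * E x) :=
      ((commute_fullTwist y).zpow_left _).eq
    show x * y * fullTwist n ^ (t * E (x * y)) =
      x * fullTwist n ^ (t * E x) * (y * fullTwist n ^ (t * E y))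
    rw [E_mul, mul_add, zpow_add]
    calc x * y * (fullTwist n ^ (t * E x) * fullTwist n ^ (t * E y))
        = x * (y * fullTwist n ^ (t * E x)) * fullTwist n ^ (t * E y) := by group
      _ = x * (fullTwist n ^ (t * E x) * y) * fullTwist n ^ (t * E y) := by rw [hc]
      _ = x * fullTwist n ^ (t * E x) * (y * fullTwist n ^ (t * E y)) := by group

lemma trans_apply {n : ℕ} (t : ℤ) (x : BraidGroup n) :
    trans n t x = x * fullTwist n ^ (t * E x) := rfl

lemma trans_gen {n : ℕ} (t : ℤ) (i : Fin n) :
    trans n t (braidGen i) = braidGen i * fullTwist n ^ t := by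
  rw [trans_apply, E_gen, mul_one]

lemma hom_unique {n : ℕ} (t : ℤ) (ρ : BraidGroup n →* BraidGroup n)
    (hρ : ∀ i : Fin n, ρ (braidGen i) = braidGen i * fullTwist n ^ t) :
    ρ = trans n t := by
  apply PresentedGroup.ext
  intro i
  rw [show (PresentedGroup.of i : BraidGroup n) = braidGen i from rfl, hρ, trans_gen]

lemma N_big {n : ℕ} (hn : 3 ≤ n) : (12 : ℤ) ≤ (n + 1) * n := by
  have h3 : (3 : ℤ) ≤ (n : ℤ) := by exact_mod_cast hn
  nlinarith

lemma trans_injective {n : ℕ} (hn : 3 ≤ n) (t : ℤ) : Function.Injective (trans n t) := by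
  set N : ℤ := (n + 1) * n with hN
  have hNbig := N_big hn
  rw [injective_iff_map_eq_one]
  intro x hx
  rw [trans_apply] at hx
  have hE : E x + (t * E x) * N = 0 := by
    have := congrArg E hx
    rwa [E_mul, E_fullTwist_zpow, E_one, ← hN] at this
  have hfac : E x * (1 + t * N) = 0 := by ring_nf; ring_nf at hE; linarith
  have hne : 1 + t * N ≠ 0 := by
    intro h0
    have hdvd : N ∣ 1 := ⟨-t, by linarith⟩
    have := Int.le_of_dvd one_pos hdvd
    omega
  have hEx : E x = 0 := by
    rcases mul_eq_zero.mp hfac with h | h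
    · exact h
    · exact absurd h hne
  rw [hEx, mul_zero, zpow_zero, mul_one] at hx
  exact hx

lemma trans_surjective_iff {n : ℕ} (hn : 3 ≤ n) (t : ℤ) :
    Function.Surjective (trans n t) ↔ t = 0 := by
  set N : ℤ := (n + 1) * n with hN
  have hNbig := N_big hn
  constructor
  · intro hs
    have hpos : 0 < n := by omega
    obtain ⟨x, hx⟩ := hs (braidGen ⟨0, hpos⟩)
    have hE : E x + (t * E x) * N = 1 := by
      have := congrArg E hx
      rwa [trans_apply, E_mul, E_fullTwist_zpow, E_gen, ← hN] at this
    have hmul : (1 + t * N) * E x = 1 := by ring_nf; ring_nf at hE; linarith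
    have hu : IsUnit (1 + t * N) := IsUnit.of_mul_eq_one _ hmul
    rcases Int.isUnit_iff.mp hu with h1 | h1
    · have htN : t * N = 0 := by linarith
      rcases mul_eq_zero.mp htN with h | h
      · exact h
      · omega
    · exfalso
      have htN : t * N = -2 := by linarith
      have hdvd : N ∣ 2 := ⟨-t, by linarith⟩
      have := Int.le_of_dvd (by norm_num) hdvd
      omega
  · rintro rfl
    intro y
    exact ⟨y, by rw [trans_apply, zero_mul, zpow_zero, mul_one]⟩

end BraidAux

/-- For `n ≥ 3` and `t : ℤ`, there is a unique endomorphism `ρ` of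
`B_{n+1}` with `ρ(σ_i) = σ_i z^t` for all `i`; it is injective for every `t`, and it is
surjective if and only if `t = 0`. -/
theorem braid_transvection_endomorphism
    (n : ℕ) (hn : 3 ≤ n) (t : ℤ) :
    (∃! ρ : BraidGroup n →* BraidGroup n,
        ∀ i : Fin n, ρ (braidGen i) = braidGen i * fullTwist n ^ t) ∧
    (∀ ρ : BraidGroup n →* BraidGroup n,
        (∀ i : Fin n, ρ (braidGen i) = braidGen i * fullTwist n ^ t) →
        Function.Injective ρ ∧ (Function.Surjective ρ ↔ t = 0)) := by
  constructor
  · exact ⟨BraidAux.trans n t, BraidAux.trans_gen t, fun ρ hρ => BraidAux.hom_unique t ρ hρ⟩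
  · intro ρ hρ
    rw [BraidAux.hom_unique t ρ hρ]
    exact ⟨BraidAux.trans_injective hn t, BraidAux.trans_surjective_iff hn t⟩
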